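/- arXiv:2404.17924 — 9 statements merged into one kernel-verified Lean document; each statement's English description precedes it below -/
import Mathlib

section
/- For E ⊆ 𝒢, define the natural extension desext(E) := posi(E ∪ G₊). If 0 ∉ desext(E), then desext(E) is a coherent set of desirable gambles containing E, and it is the minimal such: every coherent D with E ⊆ D satisfies desext(E) ⊆ D. -/
open scoped BigOperators

universe u v

def GambleSpace (Ω : Type v) : Submodule ℝ (Ω → ℝ) where
  carrier := {f | ∃ M, ∀ ω, |f ω| ≤ M}
  add_mem' := by
    rintro f g ⟨M, hM⟩ ⟨N, hN⟩
    exact ⟨M + N, fun ω => (abs_add_le _ _).trans (add_le_add (hM ω) (hN ω))⟩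
  zero_mem' := ⟨0, fun ω => by simp⟩
  smul_mem' := by
    rintro c f ⟨M, hM⟩
    exact ⟨|c| * M, fun ω => by
      simpa [abs_mul] using mul_le_mul_of_nonneg_left (hM ω) (abs_nonneg c)⟩

/-- The type of gambles: bounded functions `Ω → ℝ`. -/
abbrev Gamble (Ω : Type v) := GambleSpace Ω

/-- Pointwise order on gambles: `gle f g` means `f ≤ g` pointwise. -/
def gle {Ω : Type v} (f g : Gamble Ω) : Prop := ∀ ω, (f : Ω → ℝ) ω ≤ (g : Ω → ℝ) ω

/-- Gambles weakly dominating `0`. -/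
def Gpos (Ω : Type v) : Set (Gamble Ω) := {g | gle 0 g ∧ g ≠ 0}

/-- Positive linear hull: finite positive combinations of members of `B`. -/
def posi {Ω : Type v} (B : Set (Gamble Ω)) : Set (Gamble Ω) :=
  {f | ∃ n : ℕ, 0 < n ∧ ∃ (l : Fin n → ℝ) (g : Fin n → Gamble Ω),
    (∀ i, 0 < l i) ∧ (∀ i, g i ∈ B) ∧ f = ∑ i, l i • g i}

/-- Natural extension of a set of gambles. -/
def desext {Ω : Type v} (E : Set (Gamble Ω)) : Set (Gamble Ω) := posi (E ∪ Gpos Ω)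

/-- Coherence for a set of desirable gambles. -/
def CoherentD {Ω : Type v} (D : Set (Gamble Ω)) : Prop :=
  (0 : Gamble Ω) ∉ D ∧ Gpos Ω ⊆ D ∧
  (∀ g ∈ D, ∀ l : ℝ, 0 < l → l • g ∈ D) ∧
  (∀ f ∈ D, ∀ g ∈ D, f + g ∈ D)

/-- Coherence for a set of desirable gamble sets. -/
def CoherentK {Ω : Type v} (K : Set (Set (Gamble Ω))) : Prop :=
  (∅ : Set (Gamble Ω)) ∉ K ∧
  (∀ A ∈ K, A \ {0} ∈ K) ∧
  (∀ g ∈ Gpos Ω, ({g} : Set (Gamble Ω)) ∈ K) ∧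
  (∀ A ∈ K, ∀ B : Set (Gamble Ω), A ⊆ B → B ∈ K) ∧
  (∀ A ∈ K, ∀ F : Gamble Ω → Gamble Ω, (∀ g ∈ A, gle g (F g)) → F '' A ∈ K) ∧
  (∀ n : ℕ, 0 < n → ∀ A : Fin n → Set (Gamble Ω), (∀ i, A i ∈ K) →
    ∀ F : (Fin n → Gamble Ω) → Gamble Ω,
    (∀ g : Fin n → Gamble Ω, (∀ i, g i ∈ A i) → F g ∈ posi (Set.range g)) →
    {b | ∃ g : Fin n → Gamble Ω, (∀ i, g i ∈ A i) ∧ b = F g} ∈ K)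

/-- The infinite addition axiom. -/
def KAddInf {Ω : Type v} (K : Set (Set (Gamble Ω))) : Prop :=
  ∀ (I : Type v) (A : I → Set (Gamble Ω)), (∀ i, A i ∈ K) →
    ∀ F : (I → Gamble Ω) → Gamble Ω,
    (∀ g : I → Gamble Ω, (∀ i, g i ∈ A i) → F g ∈ posi (Set.range g)) →
    {b | ∃ g : I → Gamble Ω, (∀ i, g i ∈ A i) ∧ b = F g} ∈ K

/-- Natural extension of a set of gamble sets (nonempty case). -/
def ExtK {Ω : Type v} (𝒜 : Set (Set (Gamble Ω))) : Set (Set (Gamble Ω)) :=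
  {B | ∃ n : ℕ, 0 < n ∧ ∃ A : Fin n → Set (Gamble Ω), (∀ i, A i ∈ 𝒜) ∧
    ∀ g : Fin n → Gamble Ω, (∀ i, g i ∈ A i) →
      (0 : Gamble Ω) ∉ desext (Set.range g) → ∃ f ∈ B, f ∈ desext (Set.range g)}

lemma mem_posi_single {Ω : Type v} {B : Set (Gamble Ω)} {g : Gamble Ω} (hg : g ∈ B) :
    g ∈ posi B := by
  refine ⟨1, one_pos, fun _ => 1, fun _ => g, fun _ => one_pos, fun _ => hg, ?_⟩
  simp

lemma posi_smul {Ω : Type v} {B : Set (Gamble Ω)} {g : Gamble Ω} (hg : g ∈ posi B)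
    {l : ℝ} (hl : 0 < l) : l • g ∈ posi B := by
  obtain ⟨n, hn, lam, f, hlam, hf, rfl⟩ := hg
  refine ⟨n, hn, fun i => l * lam i, f, fun i => mul_pos hl (hlam i), hf, ?_⟩
  rw [Finset.smul_sum]
  simp [mul_smul]

lemma posi_add {Ω : Type v} {B : Set (Gamble Ω)} {f g : Gamble Ω}
    (hf : f ∈ posi B) (hg : g ∈ posi B) : f + g ∈ posi B := by
  obtain ⟨n, hn, lam, F, hlam, hF, rfl⟩ := hf
  obtain ⟨m, hm, mu, G, hmu, hG, rfl⟩ := hg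
  refine ⟨n + m, by omega, Fin.append lam mu, Fin.append F G, ?_, ?_, ?_⟩
  · intro i
    rcases Nat.lt_or_ge i.val n with hi | hi
    · have : i = Fin.castAdd m ⟨i, hi⟩ := by ext; simp
      rw [this, Fin.append_left]; exact hlam _
    · have : i = Fin.natAdd n ⟨i - n, by omega⟩ := by ext; simp; omega
      rw [this, Fin.append_right]; exact hmu _
  · intro i
    rcases Nat.lt_or_ge i.val n with hi | hi
    · have : i = Fin.castAdd m ⟨i, hi⟩ := by ext; simp
      rw [this, Fin.append_left]; exact hF _
    · have : i = Fin.natAdd n ⟨i - n, by omega⟩ := by ext; simp; omega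
      rw [this, Fin.append_right]; exact hG _
  · rw [Fin.sum_univ_add]
    congr 1 <;> (apply Finset.sum_congr rfl; intro i _; simp)

theorem stmt1 {Ω : Type v} [Nonempty Ω] (E : Set (Gamble Ω))
    (h : (0 : Gamble Ω) ∉ desext E) :
    CoherentD (desext E) ∧ E ⊆ desext E ∧
      ∀ D : Set (Gamble Ω), CoherentD D → E ⊆ D → desext E ⊆ D := by
  refine ⟨⟨h, fun g hg => mem_posi_single (Or.inr hg),
      fun g hg l hl => posi_smul hg hl, fun f hf g hg => posi_add hf hg⟩,
    fun e he => mem_posi_single (Or.inl he), ?_⟩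
  rintro D ⟨h0, hG, hs, ha⟩ hE
  rintro f ⟨n, hn, lam, g, hlam, hg, rfl⟩
  have hmem : ∀ i, lam i • g i ∈ D := by
    intro i
    have : g i ∈ D := by
      rcases hg i with h' | h'
      · exact hE h'
      · exact hG h'
    exact hs _ this _ (hlam i)
  clear hg hE hG h0 h
  induction n with
  | zero => omega
  | succ n ih =>
    rw [Fin.sum_univ_succ]
    rcases Nat.eq_zero_or_pos n with rfl | hn'
    · simpa using hmem 0
    · exact ha _ (hmem 0) _ (ih hn' (fun i => lam i.succ) (fun i => g i.succ)
        (fun i => hlam i.succ) (fun i => hmem i.succ))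
end

section
/- For E ⊆ 𝒢 with 0 ∈ desext(E) := posi(E ∪ G₊), there is no coherent set of desirable gambles D with E ⊆ D. -/
open scoped BigOperators

universe u v

lemma sum_mem_D {Ω : Type v} (D : Set (Gamble Ω))
    (hsc : ∀ g ∈ D, ∀ l : ℝ, 0 < l → l • g ∈ D)
    (hadd : ∀ f ∈ D, ∀ g ∈ D, f + g ∈ D) :
    ∀ n : ℕ, 0 < n → ∀ (l : Fin n → ℝ) (g : Fin n → Gamble Ω),
      (∀ i, 0 < l i) → (∀ i, g i ∈ D) → (∑ i, l i • g i) ∈ D := by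
  intro n
  induction n with
  | zero => intro h; omega
  | succ k ih =>
    intro _ l g hl hg
    rcases Nat.eq_zero_or_pos k with hk | hk
    · subst hk
      simpa using hsc (g 0) (hg 0) (l 0) (hl 0)
    · rw [Fin.sum_univ_succ]
      exact hadd _ (hsc (g 0) (hg 0) (l 0) (hl 0)) _
        (ih hk (fun i => l i.succ) (fun i => g i.succ) (fun i => hl _) (fun i => hg _))

theorem stmt2 {Ω : Type v} [Nonempty Ω] (E : Set (Gamble Ω))
    (h : (0 : Gamble Ω) ∈ desext E) :
    ¬ ∃ D : Set (Gamble Ω), CoherentD D ∧ E ⊆ D := by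
  rintro ⟨D, ⟨h0, hpos, hsc, hadd⟩, hE⟩
  obtain ⟨n, hn, l, g, hl, hg, hsum⟩ := h
  have : (0 : Gamble Ω) ∈ D := by
    rw [hsum]
    exact sum_mem_D D hsc hadd n hn l g hl
      (fun i => (hg i).elim (fun h => hE h) (fun h => hpos h))
  exact h0 this
end

section
/- For gambles g₁,…,gₙ and f ∈ 𝒢: f ∈ desext({g₁,…,gₙ}) := posi({g₁,…,gₙ} ∪ G₊) if and only if either f ∈ G₊ or there is some h ∈ posi({g₁,…,gₙ}) with f ≥ h pointwise. -/
open scoped BigOperators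

universe u v

lemma smul_mem_posi {Ω : Type v} {A : Set (Gamble Ω)} {a : Gamble Ω} (ha : a ∈ A)
    {c : ℝ} (hc : 0 < c) : c • a ∈ posi A := by
  exact ⟨1, one_pos, fun _ => c, fun _ => a, fun _ => hc, fun _ => ha, by simp⟩

lemma posi_mono {Ω : Type v} {A B : Set (Gamble Ω)} (h : A ⊆ B) : posi A ⊆ posi B := by
  rintro f ⟨n, hn, l, g, hl, hg, rfl⟩
  exact ⟨n, hn, l, g, hl, fun i => h (hg i), rfl⟩

lemma posi_add_s5 {Ω : Type v} {A : Set (Gamble Ω)} {x y : Gamble Ω}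
    (hx : x ∈ posi A) (hy : y ∈ posi A) : x + y ∈ posi A := by
  obtain ⟨n, hn, l, g, hl, hg, rfl⟩ := hx
  obtain ⟨m, hm, l', g', hl', hg', rfl⟩ := hy
  refine ⟨n + m, by omega, Fin.append l l', Fin.append g g', ?_, ?_, ?_⟩
  · intro i
    induction i using Fin.addCases with
    | left i => simpa using hl i
    | right i => simpa using hl' i
  · intro i
    induction i using Fin.addCases with
    | left i => simpa using hg i
    | right i => simpa using hg' i
  · rw [Fin.sum_univ_add]
    simp

lemma finset_sum_mem_posi {Ω : Type v} {ι : Type*} {A : Set (Gamble Ω)}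
    (s : Finset ι) (hs : s.Nonempty) (l : ι → ℝ) (g : ι → Gamble Ω)
    (hl : ∀ i ∈ s, 0 < l i) (hg : ∀ i ∈ s, g i ∈ A) :
    (∑ i ∈ s, l i • g i) ∈ posi A := by
  induction hs using Finset.Nonempty.cons_induction with
  | singleton i => simpa using smul_mem_posi (hg i (by simp)) (hl i (by simp))
  | cons a s ha hs ih =>
    rw [Finset.sum_cons]
    exact posi_add_s5 (smul_mem_posi (hg a (by simp)) (hl a (by simp)))
      (ih (fun i hi => hl i (by simp [hi])) (fun i hi => hg i (by simp [hi])))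

lemma coe_apply_sum {Ω : Type v} {ι : Type*} (s : Finset ι) (h : ι → Gamble Ω) (ω : Ω) :
    ((∑ i ∈ s, h i : Gamble Ω) : Ω → ℝ) ω = ∑ i ∈ s, ((h i : Ω → ℝ) ω) := by
  induction s using Finset.cons_induction with
  | empty => rfl
  | cons a s ha ih =>
    rw [Finset.sum_cons, Finset.sum_cons, ← ih]
    rfl

lemma posi_Gpos_subset {Ω : Type v} : posi (Gpos Ω) ⊆ Gpos Ω := by
  rintro f ⟨m, hm, l, g, hl, hg, rfl⟩
  have hnn : ∀ ω, ∀ i, 0 ≤ l i * (g i : Ω → ℝ) ω := fun ω i =>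
    mul_nonneg (hl i).le ((hg i).1 ω)
  have hcoe : ∀ ω, ((∑ i, l i • g i : Gamble Ω) : Ω → ℝ) ω
      = ∑ i, l i * (g i : Ω → ℝ) ω := by
    intro ω
    rw [coe_apply_sum]
    rfl
  constructor
  · intro ω
    rw [hcoe]
    exact Finset.sum_nonneg fun i _ => hnn ω i
  · intro h0
    have i0 : Fin m := ⟨0, hm⟩
    have hne := (hg i0).2
    have : ∃ ω, (g i0 : Ω → ℝ) ω ≠ 0 := by
      by_contra hc
      push_neg at hc
      exact hne (Subtype.ext (funext hc))
    obtain ⟨ω, hω⟩ := this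
    have hpos : 0 < l i0 * (g i0 : Ω → ℝ) ω :=
      mul_pos (hl i0) (lt_of_le_of_ne ((hg i0).1 ω) (Ne.symm hω))
    have hle : l i0 * (g i0 : Ω → ℝ) ω ≤ ((∑ i, l i • g i : Gamble Ω) : Ω → ℝ) ω := by
      rw [hcoe]
      exact Finset.single_le_sum (fun i _ => hnn ω i) (Finset.mem_univ i0)
    rw [h0] at hle
    have : ((0 : Gamble Ω) : Ω → ℝ) ω = 0 := rfl
    rw [this] at hle
    linarith

theorem stmt5 {Ω : Type v} [Nonempty Ω] {n : ℕ} (g : Fin n → Gamble Ω) (f : Gamble Ω) :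
    f ∈ desext (Set.range g) ↔
      (f ∈ Gpos Ω ∨ ∃ h ∈ posi (Set.range g), gle h f) := by
  classical
  constructor
  · rintro ⟨m, hm, l, G, hl, hG, rfl⟩
    set s : Finset (Fin m) := Finset.univ.filter (fun i => G i ∈ Set.range g) with hs
    have hsplit : (∑ i, l i • G i) = (∑ i ∈ s, l i • G i) + ∑ i ∈ sᶜ, l i • G i := by
      rw [Finset.sum_add_sum_compl]
    have hcompl : ∀ i ∈ sᶜ, G i ∈ Gpos Ω := by
      intro i hi
      rcases hG i with h | h
      · exact absurd (Finset.mem_filter.mpr ⟨Finset.mem_univ i, h⟩) (Finset.mem_compl.mp hi)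
      · exact h
    by_cases hsne : s.Nonempty
    · -- some indices in range g
      right
      refine ⟨∑ i ∈ s, l i • G i,
        finset_sum_mem_posi s hsne l G (fun i _ => hl i)
          (fun i hi => (Finset.mem_filter.mp hi).2), ?_⟩
      intro ω
      rw [hsplit]
      have : ((∑ i ∈ s, l i • G i) + ∑ i ∈ sᶜ, l i • G i : Gamble Ω) =
          (∑ i ∈ s, l i • G i : Gamble Ω) + (∑ i ∈ sᶜ, l i • G i : Gamble Ω) := rfl
      have hrest : 0 ≤ ((∑ i ∈ sᶜ, l i • G i : Gamble Ω) : Ω → ℝ) ω := by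
        rw [coe_apply_sum]
        exact Finset.sum_nonneg fun i hi =>
          mul_nonneg (hl i).le ((hcompl i hi).1 ω)
      have heq : (((∑ i ∈ s, l i • G i) + ∑ i ∈ sᶜ, l i • G i : Gamble Ω) : Ω → ℝ) ω
          = ((∑ i ∈ s, l i • G i : Gamble Ω) : Ω → ℝ) ω
            + ((∑ i ∈ sᶜ, l i • G i : Gamble Ω) : Ω → ℝ) ω := rfl
      rw [heq]
      linarith
    · -- all indices in Gpos
      left
      have hsc : sᶜ = Finset.univ := by
        rw [Finset.compl_eq_univ_iff, Finset.not_nonempty_iff_eq_empty] at *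
        exact hsne
      have hall : ∀ i, G i ∈ Gpos Ω := fun i => hcompl i (by simp [hsc])
      exact posi_Gpos_subset ⟨m, hm, l, G, hl, hall, rfl⟩
  · rintro (hf | ⟨h, hh, hle⟩)
    · exact ⟨1, one_pos, fun _ => 1, fun _ => f, fun _ => one_pos,
        fun _ => Or.inr hf, by simp⟩
    · by_cases hfe : f = h
      · exact hfe ▸ posi_mono Set.subset_union_left hh
      · have hfh : f - h ∈ Gpos Ω := by
          refine ⟨fun ω => ?_, fun hc => hfe ?_⟩
          · have := hle ω
            have hsub : ((f - h : Gamble Ω) : Ω → ℝ) ω = (f : Ω → ℝ) ω - (h : Ω → ℝ) ω := rfl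
            have h0 : ((0 : Gamble Ω) : Ω → ℝ) ω = 0 := rfl
            rw [hsub, h0]
            linarith
          · have := sub_eq_zero.mp hc
            exact this
        have : f = h + (f - h) := by abel
        rw [this]
        exact posi_add_s5 (posi_mono Set.subset_union_left hh)
          (by simpa using smul_mem_posi (A := Set.range g ∪ Gpos Ω) (Or.inr hfh) one_pos)
end

section
/- Define Ext(∅) := {B ⊆ 𝒢 : ∃f ∈ B with f ⪈ 0}. Then Ext(∅) is coherent, and it is the minimal coherent set of desirable gamble sets: every coherent 𝒦 contains Ext(∅). -/
open scoped BigOperators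

universe u v

lemma gpos_iff {Ω : Type v} {g : Gamble Ω} (hg : g ∈ Gpos Ω) :
    (∀ ω, 0 ≤ (g : Ω → ℝ) ω) ∧ ∃ ω, 0 < (g : Ω → ℝ) ω := by
  obtain ⟨h1, h2⟩ := hg
  have hnn : ∀ ω, 0 ≤ (g : Ω → ℝ) ω := fun ω => by simpa using h1 ω
  refine ⟨hnn, ?_⟩
  by_contra h
  push_neg at h
  apply h2
  apply Subtype.ext
  funext ω
  exact le_antisymm (h ω) (hnn ω)

lemma gpos_of {Ω : Type v} {g : Gamble Ω} (h1 : ∀ ω, 0 ≤ (g : Ω → ℝ) ω)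
    (h2 : ∃ ω, 0 < (g : Ω → ℝ) ω) : g ∈ Gpos Ω := by
  refine ⟨fun ω => by simpa using h1 ω, ?_⟩
  obtain ⟨ω, hω⟩ := h2
  intro h
  rw [h] at hω
  simp at hω

lemma posi_gpos {Ω : Type v} {S : Set (Gamble Ω)} (hS : S ⊆ Gpos Ω) :
    posi S ⊆ Gpos Ω := by
  rintro f ⟨n, hn, l, g, hl, hg, rfl⟩
  have key : ∀ ω, ((∑ i, l i • g i : Gamble Ω) : Ω → ℝ) ω = ∑ i, l i * (g i : Ω → ℝ) ω := by
    intro ω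
    rw [AddSubmonoidClass.coe_finset_sum]
    simp [Finset.sum_apply]
  have hgp := fun i => gpos_iff (hS (hg i))
  apply gpos_of
  · intro ω
    rw [key]
    exact Finset.sum_nonneg fun i _ => mul_nonneg (hl i).le ((hgp i).1 ω)
  · have i0 : Fin n := ⟨0, hn⟩
    obtain ⟨ω, hω⟩ := (hgp i0).2
    refine ⟨ω, ?_⟩
    rw [key]
    exact Finset.sum_pos' (fun i _ => mul_nonneg (hl i).le ((hgp i).1 ω))
      ⟨i0, Finset.mem_univ _, mul_pos (hl i0) hω⟩

theorem stmt9 {Ω : Type v} [Nonempty Ω] :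
    CoherentK {B : Set (Gamble Ω) | ∃ f ∈ B, f ∈ Gpos Ω} ∧
    ∀ K : Set (Set (Gamble Ω)), CoherentK K →
      {B : Set (Gamble Ω) | ∃ f ∈ B, f ∈ Gpos Ω} ⊆ K := by
  constructor
  · refine ⟨?_, ?_, ?_, ?_, ?_, ?_⟩
    · rintro ⟨f, hf, -⟩
      exact hf
    · rintro A ⟨f, hfA, hf⟩
      exact ⟨f, ⟨hfA, hf.2⟩, hf⟩
    · intro g hg
      exact ⟨g, rfl, hg⟩
    · rintro A ⟨f, hfA, hf⟩ B hAB
      exact ⟨f, hAB hfA, hf⟩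
    · rintro A ⟨f, hfA, hf⟩ F hF
      refine ⟨F f, ⟨f, hfA, rfl⟩, ?_⟩
      obtain ⟨h1, ω, hω⟩ := gpos_iff hf
      apply gpos_of
      · intro ω'
        exact le_trans (h1 ω') (hF f hfA ω')
      · exact ⟨ω, lt_of_lt_of_le hω (hF f hfA ω)⟩
    · intro n hn A hA F hF
      choose g hgA hg using hA
      refine ⟨F g, ⟨g, hgA, rfl⟩, ?_⟩
      have : Set.range g ⊆ Gpos Ω := by
        rintro _ ⟨i, rfl⟩; exact hg i
      exact posi_gpos this (hF g hgA)
  · rintro K ⟨h0, h1, h2, h3, h4, h5⟩ B ⟨f, hfB, hf⟩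
    exact h3 _ (h2 f hf) B (Set.singleton_subset_iff.mpr hfB)
end

section
/- Assume gamble sets are finite. If 𝒦 ⊆ 𝒫_fin(𝒢) satisfies KAdd and contains {g} for every g ⪈ 0, then 𝒦 satisfies the dominators axiom: if A ∈ 𝒦 and for each g ∈ A, f_g is a gamble with f_g ≥ g pointwise, then {f_g : g ∈ A} ∈ 𝒦. -/
open scoped BigOperators

universe u v

theorem stmt11 {Ω : Type v} [Nonempty Ω] (K : Set (Set (Gamble Ω)))
    (hfin : ∀ A ∈ K, A.Finite)
    (hpos : ∀ g ∈ Gpos Ω, ({g} : Set (Gamble Ω)) ∈ K)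
    (hadd : ∀ n : ℕ, 0 < n → ∀ A : Fin n → Set (Gamble Ω), (∀ i, A i ∈ K) →
      ∀ F : (Fin n → Gamble Ω) → Gamble Ω,
      (∀ g : Fin n → Gamble Ω, (∀ i, g i ∈ A i) → F g ∈ posi (Set.range g)) →
      {b | ∃ g : Fin n → Gamble Ω, (∀ i, g i ∈ A i) ∧ b = F g} ∈ K) :
    ∀ A ∈ K, ∀ F : Gamble Ω → Gamble Ω, (∀ g ∈ A, gle g (F g)) → F '' A ∈ K := by
  classical
  intro A hA F hF
  obtain ⟨n, f, hfr⟩ := (hfin A hA).fin_embedding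
  have hpmem : (fun _ : Ω => (1:ℝ)) ∈ GambleSpace Ω := ⟨1, fun ω => by simp⟩
  set p : Gamble Ω := ⟨fun _ => 1, hpmem⟩ with hp
  have hpGpos : p ∈ Gpos Ω := by
    constructor
    · intro ω; show ((0 : Gamble Ω) : Ω → ℝ) ω ≤ _
      simp [p]
    · intro h
      have := congrArg (fun q : Gamble Ω => (q : Ω → ℝ) (Classical.arbitrary Ω)) h
      simp [p] at this
  set d : Fin n → Gamble Ω := fun i => if F (f i) = f i then p else F (f i) - f i with hd
  have hdGpos : ∀ i, d i ∈ Gpos Ω := by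
    intro i
    by_cases h : F (f i) = f i
    · simpa [d, h] using hpGpos
    · simp only [d, if_neg h]
      constructor
      · intro ω
        have h1 := hF (f i) (hfr ▸ Set.mem_range_self i) ω
        show ((0 : Gamble Ω) : Ω → ℝ) ω ≤ ((F (f i) - f i : Gamble Ω) : Ω → ℝ) ω
        simp only [ZeroMemClass.coe_zero, Pi.zero_apply, AddSubgroupClass.coe_sub,
          Pi.sub_apply, sub_nonneg]
        exact h1
      · intro heq
        exact h (by rwa [sub_eq_zero] at heq)
  set A' : Fin (n+1) → Set (Gamble Ω) := Fin.cases A (fun i => {d i}) with hA'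
  have hA'K : ∀ i, A' i ∈ K := by
    intro i
    induction i using Fin.cases with
    | zero => exact hA
    | succ j => exact hpos _ (hdGpos j)
  have key := hadd (n+1) (Nat.succ_pos n) A' hA'K (fun h => F (h 0)) ?_
  · have heq : {b | ∃ g : Fin (n+1) → Gamble Ω, (∀ i, g i ∈ A' i) ∧ b = F (g 0)}
        = F '' A := by
      ext b
      constructor
      · rintro ⟨h, hh, rfl⟩
        exact ⟨h 0, hh 0, rfl⟩
      · rintro ⟨a, ha, rfl⟩
        refine ⟨Fin.cases a d, ?_, by simp⟩
        intro i
        induction i using Fin.cases with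
        | zero => exact ha
        | succ j => simp [A']
    rwa [heq] at key
  · intro h hh
    have h0 : h 0 ∈ A := hh 0
    obtain ⟨j, hj⟩ : ∃ j, f j = h 0 := by
      have : h 0 ∈ Set.range f := hfr ▸ h0
      exact this
    have hsj : h j.succ = d j := hh j.succ
    show F (h 0) ∈ posi (Set.range h)
    by_cases hc : F (f j) = f j
    · have hFh : F (h 0) = h 0 := by rw [← hj, hc, hj]
      refine ⟨1, one_pos, fun _ => 1, fun _ => h 0, fun _ => one_pos,
        fun _ => ⟨0, rfl⟩, ?_⟩
      simp [hFh]
    · refine ⟨2, two_pos, ![1,1], ![h 0, h j.succ], ?_, ?_, ?_⟩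
      · intro i; fin_cases i <;> norm_num
      · intro i; fin_cases i <;> exact ⟨_, rfl⟩
      · have : F (h 0) = h 0 + h j.succ := by
          rw [hsj, ← hj]
          simp only [d, if_neg hc]
          abel
        simp [Fin.sum_univ_two, this]
end

section
/- Let D be a coherent set of desirable gambles and define 𝒦_D := {B ⊆ 𝒢 : B ∩ D ≠ ∅}. Then 𝒦_D is a coherent set of desirable gamble sets and moreover satisfies the infinite addition axiom KAddInf. -/
open scoped BigOperators

universe u v

lemma posi_subset_of_subset {Ω : Type v} {D : Set (Gamble Ω)}
    (hs : ∀ g ∈ D, ∀ l : ℝ, 0 < l → l • g ∈ D)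
    (ha : ∀ f ∈ D, ∀ g ∈ D, f + g ∈ D)
    {B : Set (Gamble Ω)} (hB : B ⊆ D) : posi B ⊆ D := by
  rintro f ⟨n, hn, l, g, hl, hg, rfl⟩
  obtain ⟨m, rfl⟩ : ∃ m, n = m + 1 := ⟨n - 1, (Nat.succ_pred_eq_of_pos hn).symm⟩
  clear hn
  induction m with
  | zero =>
      rw [Fin.sum_univ_one]
      exact hs _ (hB (hg 0)) _ (hl 0)
  | succ k ih =>
      rw [Fin.sum_univ_castSucc]
      exact ha _ (ih (fun i => l i.castSucc) (fun i => g i.castSucc)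
        (fun i => hl _) (fun i => hg _))
        _ (hs _ (hB (hg _)) _ (hl _))

theorem stmt13 {Ω : Type v} [Nonempty Ω] (D : Set (Gamble Ω)) (hD : CoherentD D) :
    CoherentK {B : Set (Gamble Ω) | (B ∩ D).Nonempty} ∧
    KAddInf {B : Set (Gamble Ω) | (B ∩ D).Nonempty} := by
  obtain ⟨h0, hpos, hscale, hadd⟩ := hD
  have hposi : ∀ {B : Set (Gamble Ω)}, B ⊆ D → posi B ⊆ D :=
    fun {B} hB => posi_subset_of_subset hscale hadd hB
  constructor
  · refine ⟨?_, ?_, ?_, ?_, ?_, ?_⟩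
    · rintro ⟨f, hf, -⟩; exact hf
    · rintro A ⟨f, hfA, hfD⟩
      exact ⟨f, ⟨hfA, fun h => h0 (h ▸ hfD)⟩, hfD⟩
    · intro g hg; exact ⟨g, rfl, hpos hg⟩
    · rintro A ⟨f, hfA, hfD⟩ B hAB; exact ⟨f, hAB hfA, hfD⟩
    · rintro A ⟨f, hfA, hfD⟩ F hF
      refine ⟨F f, ⟨f, hfA, rfl⟩, ?_⟩
      by_cases h : F f = f
      · rwa [h]
      · have : F f - f ∈ D := hpos ⟨fun ω => by
          simpa using sub_nonneg.mpr (hF f hfA ω), fun hc => h (by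
            have := sub_eq_zero.mp hc; exact this)⟩
        have := hadd f hfD _ this
        simpa using this
    · rintro n hn A hA F hF
      have hsel : ∀ i, ∃ f, f ∈ A i ∩ D := fun i => hA i
      choose g hg using hsel
      refine ⟨F g, ⟨g, fun i => (hg i).1, rfl⟩, ?_⟩
      refine hposi ?_ (hF g (fun i => (hg i).1))
      rintro x ⟨i, rfl⟩; exact (hg i).2
  · rintro I A hA F hF
    have hsel : ∀ i, ∃ f, f ∈ A i ∩ D := fun i => hA i
    choose g hg using hsel
    refine ⟨F g, ⟨g, fun i => (hg i).1, rfl⟩, ?_⟩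
    refine hposi ?_ (hF g (fun i => (hg i).1))
    rintro x ⟨i, rfl⟩; exact (hg i).2
end

section
/- Let 𝔻 be a nonempty set of coherent sets of desirable gambles and define 𝒦_𝔻 := {B ⊆ 𝒢 : ∀D ∈ 𝔻, B ∩ D ≠ ∅}. Then 𝒦_𝔻 satisfies the infinite addition axiom: for any family (Aᵢ)_{i∈I} of members of 𝒦_𝔻 and any choice, for each selection (gᵢ)_{i∈I} ∈ ∏Aᵢ, of f_{(gᵢ)} ∈ posi({gᵢ : i ∈ I}), the set {f_{(gᵢ)} : (gᵢ) ∈ ∏Aᵢ} is in 𝒦_𝔻. -/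
open scoped BigOperators

universe u v

lemma sum_mem_of_coherent {Ω : Type v} {D : Set (Gamble Ω)} (hD : CoherentD D) :
    ∀ n : ℕ, 0 < n → ∀ h : Fin n → Gamble Ω, (∀ i, h i ∈ D) → (∑ i, h i) ∈ D := by
  intro n
  induction n with
  | zero => intro h; omega
  | succ m ih =>
    intro _ h hh
    rcases Nat.eq_zero_or_pos m with hm | hm
    · subst hm; simpa using hh 0
    · rw [Fin.sum_univ_succ]
      exact hD.2.2.2 _ (hh 0) _ (ih hm (fun i => h i.succ) (fun i => hh i.succ))

lemma posi_subset_of_coherent {Ω : Type v} {D B : Set (Gamble Ω)} (hD : CoherentD D)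
    (hB : B ⊆ D) : posi B ⊆ D := by
  rintro f ⟨n, hn, l, g, hl, hg, rfl⟩
  exact sum_mem_of_coherent hD n hn _ (fun i => hD.2.2.1 _ (hB (hg i)) _ (hl i))

theorem stmt14 {Ω : Type v} [Nonempty Ω] (𝔻 : Set (Set (Gamble Ω)))
    (h1 : 𝔻.Nonempty) (h2 : ∀ D ∈ 𝔻, CoherentD D) :
    KAddInf {B : Set (Gamble Ω) | ∀ D ∈ 𝔻, (B ∩ D).Nonempty} := by
  intro I A hA F hF D hD
  have hch : ∀ i, ∃ x, x ∈ A i ∩ D := fun i => hA i D hD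
  choose g hg using hch
  refine ⟨F g, ⟨g, fun i => (hg i).1, rfl⟩, ?_⟩
  refine posi_subset_of_coherent (h2 D hD) ?_ (hF g (fun i => (hg i).1))
  rintro x ⟨i, rfl⟩
  exact (hg i).2
end

section
/- Let 𝔇 be a nonempty collection of nonempty sets 𝔻 of coherent sets of desirable gambles, and suppose 𝔇 is downwards closed in the sense that for all 𝔻₁, 𝔻₂ ∈ 𝔇 there is 𝔻 ∈ 𝔇 with 𝔻 ⊆ 𝔻₁ ∩ 𝔻₂. Define 𝒦_𝔇 := {B ⊆ 𝒢 : ∃𝔻 ∈ 𝔇 such that ∀D ∈ 𝔻, B ∩ D ≠ ∅}. Then 𝒦_𝔇 is a coherent set of desirable gamble sets. -/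
open scoped BigOperators

universe u v

lemma coh_sum {Ω : Type v} {D : Set (Gamble Ω)} (hD : CoherentD D) :
    ∀ n : ℕ, 0 < n → ∀ (l : Fin n → ℝ) (g : Fin n → Gamble Ω),
      (∀ i, 0 < l i) → (∀ i, g i ∈ D) → (∑ i, l i • g i) ∈ D := by
  intro n
  induction n with
  | zero => intro h; exact absurd h (by omega)
  | succ n ih =>
    intro _ l g hl hg
    rw [Fin.sum_univ_castSucc]
    rcases Nat.eq_zero_or_pos n with h0 | hpos
    · subst h0
      simpa using hD.2.2.1 _ (hg (Fin.last 0)) _ (hl _)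
    · exact hD.2.2.2 _ (ih hpos _ _ (fun i => hl _) (fun i => hg _)) _
        (hD.2.2.1 _ (hg _) _ (hl _))

lemma coh_posi {Ω : Type v} {D : Set (Gamble Ω)} (hD : CoherentD D)
    {S : Set (Gamble Ω)} (hS : S ⊆ D) : posi S ⊆ D := by
  rintro f ⟨n, hn, l, g, hl, hg, rfl⟩
  exact coh_sum hD n hn l g hl fun i => hS (hg i)

lemma coh_dom {Ω : Type v} {D : Set (Gamble Ω)} (hD : CoherentD D)
    {g f : Gamble Ω} (hg : g ∈ D) (hle : gle g f) : f ∈ D := by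
  by_cases h : f = g
  · subst h; exact hg
  · have hpos : f - g ∈ Gpos Ω := by
      constructor
      · intro ω
        have := hle ω
        simp only [ZeroMemClass.coe_zero, Pi.zero_apply, AddSubgroupClass.coe_sub,
          Pi.sub_apply]
        linarith
      · exact sub_ne_zero.mpr h
    have := hD.2.2.2 g hg (f - g) (hD.2.1 hpos)
    simpa using this

lemma finite_inter {Ω : Type v} (𝔇 : Set (Set (Set (Gamble Ω)))) (h1 : 𝔇.Nonempty)
    (h3 : ∀ 𝔻₁ ∈ 𝔇, ∀ 𝔻₂ ∈ 𝔇, ∃ 𝔻 ∈ 𝔇, 𝔻 ⊆ 𝔻₁ ∩ 𝔻₂) :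
    ∀ n (f : Fin n → Set (Set (Gamble Ω))), (∀ i, f i ∈ 𝔇) →
      ∃ 𝔻 ∈ 𝔇, ∀ i, 𝔻 ⊆ f i := by
  intro n
  induction n with
  | zero =>
    intro f _
    obtain ⟨D, hD⟩ := h1
    exact ⟨D, hD, fun i => i.elim0⟩
  | succ n ih =>
    intro f hf
    obtain ⟨D', hD', hsub⟩ := ih (fun i => f i.castSucc) (fun i => hf _)
    obtain ⟨D, hD, hsub2⟩ := h3 D' hD' (f (Fin.last n)) (hf _)
    refine ⟨D, hD, fun i => Fin.lastCases ?_ ?_ i⟩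
    · exact fun x hx => (hsub2 hx).2
    · exact fun j x hx => hsub j (hsub2 hx).1

theorem stmt15 {Ω : Type v} [Nonempty Ω] (𝔇 : Set (Set (Set (Gamble Ω))))
    (h1 : 𝔇.Nonempty)
    (h2 : ∀ 𝔻 ∈ 𝔇, 𝔻.Nonempty ∧ ∀ D ∈ 𝔻, CoherentD D)
    (h3 : ∀ 𝔻₁ ∈ 𝔇, ∀ 𝔻₂ ∈ 𝔇, ∃ 𝔻 ∈ 𝔇, 𝔻 ⊆ 𝔻₁ ∩ 𝔻₂) :
    CoherentK {B : Set (Gamble Ω) | ∃ 𝔻 ∈ 𝔇, ∀ D ∈ 𝔻, (B ∩ D).Nonempty} := by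
  refine ⟨?_, ?_, ?_, ?_, ?_, ?_⟩
  · rintro ⟨𝔻, h𝔻, hall⟩
    obtain ⟨D, hD⟩ := (h2 𝔻 h𝔻).1
    obtain ⟨x, hx, _⟩ := hall D hD
    exact hx
  · rintro A ⟨𝔻, h𝔻, hall⟩
    refine ⟨𝔻, h𝔻, fun D hD => ?_⟩
    obtain ⟨x, hxA, hxD⟩ := hall D hD
    have hx0 : x ≠ 0 := fun h => ((h2 𝔻 h𝔻).2 D hD).1 (h ▸ hxD)
    exact ⟨x, ⟨hxA, hx0⟩, hxD⟩
  · intro g hg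
    obtain ⟨𝔻, h𝔻⟩ := h1
    exact ⟨𝔻, h𝔻, fun D hD => ⟨g, rfl, ((h2 𝔻 h𝔻).2 D hD).2.1 hg⟩⟩
  · rintro A ⟨𝔻, h𝔻, hall⟩ B hAB
    refine ⟨𝔻, h𝔻, fun D hD => ?_⟩
    obtain ⟨x, hxA, hxD⟩ := hall D hD
    exact ⟨x, hAB hxA, hxD⟩
  · rintro A ⟨𝔻, h𝔻, hall⟩ F hF
    refine ⟨𝔻, h𝔻, fun D hD => ?_⟩
    obtain ⟨x, hxA, hxD⟩ := hall D hD
    exact ⟨F x, ⟨x, hxA, rfl⟩, coh_dom ((h2 𝔻 h𝔻).2 D hD) hxD (hF x hxA)⟩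
  · intro n hn A hA F hF
    choose 𝔻i h𝔻i hAi using hA
    obtain ⟨𝔻, h𝔻, hsub⟩ := finite_inter 𝔇 h1 h3 n 𝔻i h𝔻i
    refine ⟨𝔻, h𝔻, fun D hD => ?_⟩
    have : ∀ i, (A i ∩ D).Nonempty := fun i => hAi i D (hsub i hD)
    choose g hgA hgD using this
    refine ⟨F g, ⟨g, hgA, rfl⟩, ?_⟩
    refine coh_posi ((h2 𝔻 h𝔻).2 D hD) ?_ (hF g hgA)
    rintro x ⟨i, rfl⟩
    exact hgD i
end

section
/- 𝒦 ⊆ 𝒫(𝒢) is coherent if and only if there is a nonempty collection 𝔇 of nonempty sets of coherent D's with the finite intersection property (no finite intersection 𝔻₁ ∩ … ∩ 𝔻ₙ of members of 𝔇 is empty) such that B ∈ 𝒦 iff there exist 𝔻₁,…,𝔻ₙ ∈ 𝔇 with B ∩ D ≠ ∅ for every D ∈ 𝔻₁ ∩ … ∩ 𝔻ₙ. -/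
open scoped BigOperators

universe u v

namespace Stmt18

variable {Ω : Type v}

noncomputable def ev (ω : Ω) : Gamble Ω →ₗ[ℝ] ℝ :=
  (LinearMap.proj ω).comp (GambleSpace Ω).subtype

lemma ev_apply (ω : Ω) (g : Gamble Ω) : ev ω g = (g : Ω → ℝ) ω := rfl

lemma gle_iff {f g : Gamble Ω} : gle f g ↔ ∀ ω, ev ω f ≤ ev ω g := Iff.rfl

lemma gle_refl (f : Gamble Ω) : gle f f := fun _ => le_rfl

lemma ne_zero_iff {g : Gamble Ω} : g ≠ 0 ↔ ∃ ω, ev ω g ≠ 0 := by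
  constructor
  · intro h
    by_contra hc
    push_neg at hc
    exact h (Subtype.ext (funext fun ω => hc ω))
  · rintro ⟨ω, hω⟩ rfl
    simp at hω

lemma mem_Gpos_iff {g : Gamble Ω} :
    g ∈ Gpos Ω ↔ (∀ ω, 0 ≤ ev ω g) ∧ ∃ ω, 0 < ev ω g := by
  constructor
  · rintro ⟨h1, h2⟩
    have h1' : ∀ ω, 0 ≤ ev ω g := by
      intro ω; have := h1 ω; simpa [ev_apply] using this
    refine ⟨h1', ?_⟩
    obtain ⟨ω, hω⟩ := ne_zero_iff.mp h2
    exact ⟨ω, lt_of_le_of_ne (h1' ω) (Ne.symm hω)⟩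
  · rintro ⟨h1, ω, hω⟩
    refine ⟨fun ω' => by simpa [ev_apply] using h1 ω', ne_zero_iff.mpr ⟨ω, ne_of_gt hω⟩⟩


lemma single_mem_posi {S : Set (Gamble Ω)} {g : Gamble Ω} (hg : g ∈ S) : g ∈ posi S := by
  refine ⟨1, one_pos, fun _ => 1, fun _ => g, fun _ => one_pos, fun _ => hg, by simp⟩

lemma posi_mono {S T : Set (Gamble Ω)} (h : S ⊆ T) : posi S ⊆ posi T := by
  rintro f ⟨n, hn, l, g, hl, hg, rfl⟩
  exact ⟨n, hn, l, g, hl, fun i => h (hg i), rfl⟩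

lemma mem_posi_iff {S : Set (Gamble Ω)} {f : Gamble Ω} :
    f ∈ posi S ↔ ∃ t : Finset (Gamble Ω), t.Nonempty ∧ ↑t ⊆ S ∧
      ∃ c : Gamble Ω → ℝ, (∀ g ∈ t, 0 < c g) ∧ f = ∑ g ∈ t, c g • g := by
  constructor
  · rintro ⟨n, hn, l, g, hl, hg, rfl⟩
    classical
    refine ⟨Finset.image g Finset.univ, ?_, ?_, fun h => ∑ i ∈ Finset.univ.filter (fun i => g i = h), l i, ?_, ?_⟩
    · exact (Finset.univ_nonempty_iff.mpr (Fin.pos_iff_nonempty.mp hn)).image g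
    · intro h hh
      simp only [Finset.coe_image, Set.mem_image] at hh
      obtain ⟨i, _, rfl⟩ := hh
      exact hg i
    · intro h hh
      simp only [Finset.mem_image, Finset.mem_univ, true_and] at hh
      obtain ⟨i, rfl⟩ := hh
      refine Finset.sum_pos' (fun j _ => le_of_lt (hl j)) ⟨i, by simp, hl i⟩
    · rw [← Finset.sum_fiberwise_of_maps_to (g := g) (t := Finset.image g Finset.univ)
        (fun i _ => Finset.mem_image_of_mem g (Finset.mem_univ i))]
      refine Finset.sum_congr rfl fun h _ => ?_
      rw [Finset.sum_smul]
      refine Finset.sum_congr rfl fun i hi => ?_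
      simp only [Finset.mem_filter] at hi
      rw [hi.2]
  · rintro ⟨t, ht, hts, c, hc, rfl⟩
    classical
    refine ⟨t.card, Finset.card_pos.mpr ht, fun i => c (t.equivFin.symm i), fun i => (t.equivFin.symm i : Gamble Ω), fun i => hc _ (t.equivFin.symm i).2, fun i => hts (t.equivFin.symm i).2, ?_⟩
    rw [← Finset.sum_attach t (fun g => c g • g)]
    exact (Fintype.sum_equiv t.equivFin.symm _ _ (fun i => rfl)).symm

lemma posi_subset_of_closed {D S : Set (Gamble Ω)}
    (hsmul : ∀ g ∈ D, ∀ l : ℝ, 0 < l → l • g ∈ D)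
    (hadd : ∀ f ∈ D, ∀ g ∈ D, f + g ∈ D)
    (hS : S ⊆ D) : posi S ⊆ D := by
  intro f hf
  rw [mem_posi_iff] at hf
  obtain ⟨t, ht, hts, c, hc, rfl⟩ := hf
  induction ht using Finset.Nonempty.cons_induction with
  | singleton a =>
    simp only [Finset.sum_singleton]
    exact hsmul a (hS (hts (by simp))) _ (hc a (by simp))
  | cons a s h hs ih =>
    rw [Finset.sum_cons]
    refine hadd _ (hsmul a (hS (hts (by simp))) _ (hc a (by simp))) _ ?_
    refine ih (fun x hx => hts ?_) (fun g hg => hc g (by simp [hg]))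
    simpa using Or.inr hx
  
lemma Gpos_smul {g : Gamble Ω} (hg : g ∈ Gpos Ω) {l : ℝ} (hl : 0 < l) : l • g ∈ Gpos Ω := by
  rw [mem_Gpos_iff] at hg ⊢
  obtain ⟨h1, ω, hω⟩ := hg
  refine ⟨fun ω' => ?_, ω, ?_⟩
  · rw [map_smul]; exact mul_nonneg hl.le (h1 ω')
  · rw [map_smul]; exact mul_pos hl hω

lemma Gpos_add {f g : Gamble Ω} (hf : f ∈ Gpos Ω) (hg : g ∈ Gpos Ω) : f + g ∈ Gpos Ω := by
  rw [mem_Gpos_iff] at hf hg ⊢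
  obtain ⟨h1, ω, hω⟩ := hf
  obtain ⟨h2, _⟩ := hg
  refine ⟨fun ω' => ?_, ω, ?_⟩
  · rw [map_add]; exact add_nonneg (h1 ω') (h2 ω')
  · rw [map_add]; exact add_pos_of_pos_of_nonneg hω (h2 ω)

lemma posi_Gpos_subset : posi (Gpos Ω) ⊆ Gpos Ω :=
  posi_subset_of_closed (fun g hg l hl => Gpos_smul hg hl) (fun f hf g hg => Gpos_add hf hg)
    (le_refl _)

lemma decomp {S : Set (Gamble Ω)} {f : Gamble Ω} (hf : f ∈ posi (S ∪ Gpos Ω)) :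
    f ∈ posi (Gpos Ω) ∨ ∃ p ∈ posi S, gle p f := by
  classical
  rw [mem_posi_iff] at hf
  obtain ⟨t, ht, hts, c, hc, rfl⟩ := hf
  by_cases h1 : (t.filter (· ∈ S)).Nonempty
  · right
    refine ⟨∑ g ∈ t.filter (· ∈ S), c g • g, ?_, ?_⟩
    · rw [mem_posi_iff]
      refine ⟨t.filter (· ∈ S), h1, ?_, c, fun g hg => hc g (Finset.mem_filter.mp hg).1, rfl⟩
      intro g hg
      simp only [Finset.coe_filter, Set.mem_setOf_eq] at hg
      exact hg.2
    · intro ω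
      rw [← ev_apply, ← ev_apply, map_sum, map_sum,
        ← Finset.sum_filter_add_sum_filter_not t (· ∈ S) (fun g => ev ω (c g • g))]
      refine le_add_of_nonneg_right (Finset.sum_nonneg fun g hg => ?_)
      simp only [Finset.mem_filter] at hg
      have hgp : g ∈ Gpos Ω := (hts hg.1).resolve_left hg.2
      rw [map_smul]
      exact mul_nonneg (hc g hg.1).le ((mem_Gpos_iff.mp hgp).1 ω)
  · left
    rw [mem_posi_iff]
    refine ⟨t, ht, fun g hg => ?_, c, hc, rfl⟩
    have hg' : g ∈ t := hg
    refine (hts hg).resolve_left fun hS => h1 ⟨g, Finset.mem_filter.mpr ⟨hg', hS⟩⟩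

lemma posi_smul {T : Set (Gamble Ω)} {g : Gamble Ω} (hg : g ∈ posi T) {l : ℝ} (hl : 0 < l) :
    l • g ∈ posi T := by
  obtain ⟨n, hn, c, G, hc, hG, rfl⟩ := hg
  exact ⟨n, hn, fun i => l * c i, G, fun i => mul_pos hl (hc i), hG, by
    rw [Finset.smul_sum]; exact Finset.sum_congr rfl fun i _ => (smul_smul l (c i) (G i))⟩

lemma posi_add {T : Set (Gamble Ω)} {f g : Gamble Ω} (hf : f ∈ posi T) (hg : g ∈ posi T) :
    f + g ∈ posi T := by
  classical
  rw [mem_posi_iff] at hf hg ⊢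
  obtain ⟨t1, ht1, hts1, c1, hc1, rfl⟩ := hf
  obtain ⟨t2, ht2, hts2, c2, hc2, rfl⟩ := hg
  refine ⟨t1 ∪ t2, ht1.mono Finset.subset_union_left, ?_,
    fun g => (if g ∈ t1 then c1 g else 0) + (if g ∈ t2 then c2 g else 0), ?_, ?_⟩
  · intro x hx
    rcases Finset.mem_union.mp hx with h | h
    · exact hts1 h
    · exact hts2 h
  · intro x hx
    rcases Finset.mem_union.mp hx with h | h
    · refine add_pos_of_pos_of_nonneg (by simp [h, hc1 x h])
        (by split_ifs with h'; exacts [(hc2 x h').le, le_rfl])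
    · refine add_pos_of_nonneg_of_pos
        (by split_ifs with h'; exacts [(hc1 x h').le, le_rfl]) (by simp [h, hc2 x h])
  · have e1 : ∀ t' : Finset (Gamble Ω), ∀ c : Gamble Ω → ℝ, (t1 ∪ t2) ∩ t' = t' →
        ∑ x ∈ t1 ∪ t2, (if x ∈ t' then c x else 0) • x = ∑ x ∈ t', c x • x := by
      intro t' c hsub
      rw [Finset.sum_congr rfl (fun x _ => by
        split_ifs <;> simp : ∀ x ∈ t1 ∪ t2, (if x ∈ t' then c x else 0) • x
          = if x ∈ t' then c x • x else 0),
        Finset.sum_ite_mem, hsub]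
    symm
    rw [Finset.sum_congr rfl (fun x _ => add_smul _ _ x), Finset.sum_add_distrib,
      e1 t1 c1 Finset.union_inter_cancel_left, e1 t2 c2 Finset.union_inter_cancel_right]

lemma subset_desext {S : Set (Gamble Ω)} : S ⊆ desext S :=
  fun _ hg => single_mem_posi (Or.inl hg)

lemma Gpos_subset_desext {S : Set (Gamble Ω)} : Gpos Ω ⊆ desext S :=
  fun _ hg => single_mem_posi (Or.inr hg)

lemma coherentD_desext {S : Set (Gamble Ω)} (h0 : (0 : Gamble Ω) ∉ desext S) :
    CoherentD (desext S) :=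
  ⟨h0, Gpos_subset_desext, fun _ hg _ hl => posi_smul hg hl, fun _ hf _ hg => posi_add hf hg⟩

lemma coherentD_posi_subset {D S : Set (Gamble Ω)} (hD : CoherentD D) (hS : S ⊆ D) :
    posi S ⊆ D :=
  posi_subset_of_closed hD.2.2.1 hD.2.2.2 hS

lemma coherentD_dom {D : Set (Gamble Ω)} (hD : CoherentD D) {g f : Gamble Ω}
    (hg : g ∈ D) (hle : gle g f) : f ∈ D := by
  by_cases hfg : f = g
  · rwa [hfg]
  · have hmem : f - g ∈ Gpos Ω := by
      rw [mem_Gpos_iff]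
      refine ⟨fun ω => by rw [map_sub]; linarith [gle_iff.mp hle ω], ?_⟩
      have : f - g ≠ 0 := sub_ne_zero.mpr hfg
      obtain ⟨ω, hω⟩ := ne_zero_iff.mp this
      exact ⟨ω, lt_of_le_of_ne (by rw [map_sub]; linarith [gle_iff.mp hle ω])
        (by rw [map_sub] at hω ⊢; exact Ne.symm hω)⟩
    have := hD.2.2.2 _ hg _ (hD.2.1 hmem)
    simpa using this

lemma zero_not_mem_posi_Gpos : (0 : Gamble Ω) ∉ posi (Gpos Ω) := by
  intro h
  exact (posi_Gpos_subset h).2 rfl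

lemma Gpos_nonempty [Nonempty Ω] : (Gpos Ω).Nonempty := by
  refine ⟨⟨fun _ => 1, 1, fun ω => by norm_num⟩, mem_Gpos_iff.mpr ⟨fun ω => ?_, ?_⟩⟩
  · rw [ev_apply]; norm_num
  · obtain ⟨ω⟩ := ‹Nonempty Ω›
    exact ⟨ω, by rw [ev_apply]; norm_num⟩

lemma sel {K : Set (Set (Gamble Ω))} (hK : CoherentK K) {n : ℕ} (hn : 0 < n)
    {A : Fin n → Set (Gamble Ω)} (hA : ∀ i, A i ∈ K) :
    ∃ g : Fin n → Gamble Ω, (∀ i, g i ∈ A i) ∧ (0 : Gamble Ω) ∉ desext (Set.range g) := by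
  by_contra hcon
  push_neg at hcon
  classical
  have hP : ∀ g : Fin n → Gamble Ω, (∀ i, g i ∈ A i) →
      ∃ p, p ∈ posi (Set.range g) ∧ gle p 0 := by
    intro g hg
    rcases decomp (hcon g hg) with h | ⟨p, hp, hple⟩
    · exact absurd h zero_not_mem_posi_Gpos
    · exact ⟨p, hp, hple⟩
  let F : (Fin n → Gamble Ω) → Gamble Ω := fun g =>
    if h : ∃ p, p ∈ posi (Set.range g) ∧ gle p 0 then h.choose else 0
  have hF : ∀ g, (∀ i, g i ∈ A i) → F g ∈ posi (Set.range g) ∧ gle (F g) 0 := by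
    intro g hg
    have h := hP g hg
    simp only [F, dif_pos h]
    exact h.choose_spec
  have hC := hK.2.2.2.2.2 n hn A hA F (fun g hg => (hF g hg).1)
  set C := {b | ∃ g, (∀ i, g i ∈ A i) ∧ b = F g} with hCdef
  have hdom := hK.2.2.2.2.1 C hC (fun _ => 0) ?_
  · have hCne : C.Nonempty := by
      have hne : ∀ i, (A i).Nonempty := fun i =>
        Set.nonempty_iff_ne_empty.mpr (fun h => hK.1 (h ▸ hA i))
      choose g hg using hne
      exact ⟨F g, g, hg, rfl⟩
    have himg : (fun _ => (0 : Gamble Ω)) '' C = {0} := by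
      apply Set.Subset.antisymm
      · rintro x ⟨b, _, rfl⟩; rfl
      · rintro x rfl; exact ⟨hCne.choose, hCne.choose_spec, rfl⟩
    rw [himg] at hdom
    have h2 := hK.2.1 _ hdom
    rw [Set.diff_self] at h2
    exact hK.1 h2
  · rintro b ⟨g, hg, rfl⟩
    exact (hF g hg).2

lemma backward {K : Set (Set (Gamble Ω))} [Nonempty Ω]
    (𝔇 : Set (Set (Set (Gamble Ω))))
    (h1 : 𝔇.Nonempty)
    (h2 : ∀ 𝔻 ∈ 𝔇, 𝔻.Nonempty ∧ ∀ D ∈ 𝔻, CoherentD D)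
    (h3 : ∀ n : ℕ, 0 < n → ∀ Ds : Fin n → Set (Set (Gamble Ω)),
        (∀ i, Ds i ∈ 𝔇) → (⋂ i, Ds i).Nonempty)
    (h4 : ∀ B : Set (Gamble Ω),
        B ∈ K ↔ ∃ n : ℕ, 0 < n ∧ ∃ Ds : Fin n → Set (Set (Gamble Ω)),
          (∀ i, Ds i ∈ 𝔇) ∧ ∀ D ∈ ⋂ i, Ds i, (B ∩ D).Nonempty) :
    CoherentK K := by
  classical
  refine ⟨?_, ?_, ?_, ?_, ?_, ?_⟩
  · intro hmem
    obtain ⟨n, hn, Ds, hDs, hB⟩ := (h4 _).mp hmem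
    obtain ⟨D, hD⟩ := h3 n hn Ds hDs
    obtain ⟨f, hf, -⟩ := hB D hD
    exact hf
  · intro A hA
    obtain ⟨n, hn, Ds, hDs, hB⟩ := (h4 _).mp hA
    refine (h4 _).mpr ⟨n, hn, Ds, hDs, fun D hD => ?_⟩
    have hDcoh : CoherentD D :=
      (h2 _ (hDs ⟨0, hn⟩)).2 D (Set.mem_iInter.mp hD ⟨0, hn⟩)
    obtain ⟨f, hfA, hfD⟩ := hB D hD
    have hf0 : f ≠ 0 := fun h => hDcoh.1 (h ▸ hfD)
    exact ⟨f, ⟨hfA, hf0⟩, hfD⟩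
  · intro g hg
    obtain ⟨𝔻, h𝔻⟩ := h1
    refine (h4 _).mpr ⟨1, one_pos, fun _ => 𝔻, fun _ => h𝔻, fun D hD => ?_⟩
    have hDcoh : CoherentD D := (h2 _ h𝔻).2 D (Set.mem_iInter.mp hD 0)
    exact ⟨g, rfl, hDcoh.2.1 hg⟩
  · intro A hA B hAB
    obtain ⟨n, hn, Ds, hDs, hB⟩ := (h4 _).mp hA
    refine (h4 _).mpr ⟨n, hn, Ds, hDs, fun D hD => ?_⟩
    obtain ⟨f, hfA, hfD⟩ := hB D hD
    exact ⟨f, hAB hfA, hfD⟩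
  · intro A hA F hF
    obtain ⟨n, hn, Ds, hDs, hB⟩ := (h4 _).mp hA
    refine (h4 _).mpr ⟨n, hn, Ds, hDs, fun D hD => ?_⟩
    have hDcoh : CoherentD D :=
      (h2 _ (hDs ⟨0, hn⟩)).2 D (Set.mem_iInter.mp hD ⟨0, hn⟩)
    obtain ⟨g, hgA, hgD⟩ := hB D hD
    exact ⟨F g, Set.mem_image_of_mem F hgA, coherentD_dom hDcoh hgD (hF g hgA)⟩
  · intro n hn A hA F hF
    have hrep : ∀ i, ∃ m : ℕ, 0 < m ∧ ∃ Ds : Fin m → Set (Set (Gamble Ω)),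
        (∀ k, Ds k ∈ 𝔇) ∧ ∀ D ∈ ⋂ k, Ds k, (A i ∩ D).Nonempty :=
      fun i => (h4 _).mp (hA i)
    choose m hm Dss hDss hADss using hrep
    let ι := Σ i : Fin n, Fin (m i)
    have : Nonempty ι := ⟨⟨⟨0, hn⟩, ⟨0, hm ⟨0, hn⟩⟩⟩⟩
    let e : ι ≃ Fin (Fintype.card ι) := Fintype.equivFin ι
    refine (h4 _).mpr ⟨Fintype.card ι, Fintype.card_pos, fun j => Dss (e.symm j).1 (e.symm j).2,
      fun j => hDss _ _, fun D hD => ?_⟩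
    have hDi : ∀ i, D ∈ ⋂ k, Dss i k := by
      intro i
      rw [Set.mem_iInter]
      intro k
      have := Set.mem_iInter.mp hD (e ⟨i, k⟩)
      rwa [Equiv.symm_apply_apply] at this
    have hDcoh : CoherentD D :=
      (h2 _ (hDss ⟨0, hn⟩ ⟨0, hm ⟨0, hn⟩⟩)).2 D (Set.mem_iInter.mp (hDi ⟨0, hn⟩) _)
    have hsel : ∀ i, ∃ g, g ∈ A i ∧ g ∈ D := by
      intro i
      obtain ⟨g, hg1, hg2⟩ := hADss i D (hDi i)
      exact ⟨g, hg1, hg2⟩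
    choose g hg1 hg2 using hsel
    refine ⟨F g, ⟨g, hg1, rfl⟩, ?_⟩
    refine coherentD_posi_subset hDcoh ?_ (hF g hg1)
    rintro x ⟨i, rfl⟩
    exact hg2 i

def DD {Ω : Type v} (B : Set (Gamble Ω)) : Set (Set (Gamble Ω)) :=
  {D | CoherentD D ∧ (B ∩ D).Nonempty}

lemma forward {K : Set (Set (Gamble Ω))} [Nonempty Ω] (hK : CoherentK K) :
    ∃ 𝔇 : Set (Set (Set (Gamble Ω))),
      𝔇.Nonempty ∧
      (∀ 𝔻 ∈ 𝔇, 𝔻.Nonempty ∧ ∀ D ∈ 𝔻, CoherentD D) ∧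
      (∀ n : ℕ, 0 < n → ∀ Ds : Fin n → Set (Set (Gamble Ω)),
        (∀ i, Ds i ∈ 𝔇) → (⋂ i, Ds i).Nonempty) ∧
      (∀ B : Set (Gamble Ω),
        B ∈ K ↔ ∃ n : ℕ, 0 < n ∧ ∃ Ds : Fin n → Set (Set (Gamble Ω)),
          (∀ i, Ds i ∈ 𝔇) ∧ ∀ D ∈ ⋂ i, Ds i, (B ∩ D).Nonempty) := by
  classical
  refine ⟨DD '' K, ?_, ?_, ?_, ?_⟩
  · obtain ⟨g, hg⟩ := Gpos_nonempty (Ω := Ω)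
    exact ⟨DD {g}, Set.mem_image_of_mem _ (hK.2.2.1 g hg)⟩
  · rintro 𝔻 ⟨B, hB, rfl⟩
    constructor
    · obtain ⟨g, hg, h0⟩ := sel hK one_pos (A := fun _ : Fin 1 => B) (fun _ => hB)
      refine ⟨desext (Set.range g), coherentD_desext h0, g 0, hg 0, subset_desext ⟨0, rfl⟩⟩
    · exact fun D hD => hD.1
  · intro n hn Ds hDs
    have : ∀ i, ∃ B ∈ K, DD B = Ds i := fun i => hDs i
    choose B hB hBDs using this
    obtain ⟨g, hg, h0⟩ := sel hK hn (A := B) hB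
    refine ⟨desext (Set.range g), Set.mem_iInter.mpr fun i => ?_⟩
    rw [← hBDs i]
    exact ⟨coherentD_desext h0, g i, hg i, subset_desext ⟨i, rfl⟩⟩
  · intro B
    constructor
    · intro hB
      refine ⟨1, one_pos, fun _ => DD B, fun _ => Set.mem_image_of_mem _ hB, fun D hD => ?_⟩
      exact (Set.mem_iInter.mp hD 0).2
    · rintro ⟨n, hn, Ds, hDs, hB⟩
      have : ∀ i, ∃ A ∈ K, DD A = Ds i := fun i => hDs i
      choose A hA hADs using this
      by_cases hBG : ∃ f ∈ B, f ∈ Gpos Ω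
      · obtain ⟨f, hfB, hfG⟩ := hBG
        exact hK.2.2.2.1 _ (hK.2.2.1 f hfG) B (Set.singleton_subset_iff.mpr hfB)
      · push_neg at hBG
        have hP : ∀ g : Fin n → Gamble Ω, (∀ i, g i ∈ A i) →
            ∃ p, p ∈ posi (Set.range g) ∧ (gle p 0 ∨ ∃ f ∈ B, gle p f) := by
          intro g hg
          by_cases h0 : (0 : Gamble Ω) ∈ desext (Set.range g)
          · rcases decomp h0 with h | ⟨p, hp, hple⟩
            · exact absurd h zero_not_mem_posi_Gpos
            · exact ⟨p, hp, Or.inl hple⟩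
          · have hDcoh := coherentD_desext h0
            have hDmem : desext (Set.range g) ∈ ⋂ i, Ds i := by
              refine Set.mem_iInter.mpr fun i => ?_
              rw [← hADs i]
              exact ⟨hDcoh, g i, hg i, subset_desext ⟨i, rfl⟩⟩
            obtain ⟨f, hfB, hfD⟩ := hB _ hDmem
            rcases decomp hfD with h | ⟨p, hp, hple⟩
            · exact absurd (posi_Gpos_subset h) (hBG f hfB)
            · exact ⟨p, hp, Or.inr ⟨f, hfB, hple⟩⟩
        let F : (Fin n → Gamble Ω) → Gamble Ω := fun g =>
          if h : ∃ p, p ∈ posi (Set.range g) ∧ (gle p 0 ∨ ∃ f ∈ B, gle p f) then h.choose else 0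
        have hF : ∀ g, (∀ i, g i ∈ A i) →
            F g ∈ posi (Set.range g) ∧ (gle (F g) 0 ∨ ∃ f ∈ B, gle (F g) f) := by
          intro g hg
          have h := hP g hg
          simp only [F, dif_pos h]
          exact h.choose_spec
        have hC := hK.2.2.2.2.2 n hn A hA F (fun g hg => (hF g hg).1)
        set C := {b | ∃ g, (∀ i, g i ∈ A i) ∧ b = F g} with hCdef
        let G : Gamble Ω → Gamble Ω := fun b =>
          if h : ∃ f ∈ B, gle b f then h.choose else 0
        have hdom : ∀ b ∈ C, gle b (G b) := by
          rintro b ⟨g, hg, rfl⟩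
          by_cases h : ∃ f ∈ B, gle (F g) f
          · simp only [G, dif_pos h]
            exact h.choose_spec.2
          · simp only [G, dif_neg h]
            exact ((hF g hg).2).resolve_right h
        have himg := hK.2.2.2.2.1 C hC G hdom
        have hsub := hK.2.1 _ himg
        refine hK.2.2.2.1 _ hsub B ?_
        rintro x ⟨⟨b, hbC, rfl⟩, hx0⟩
        by_cases h : ∃ f ∈ B, gle b f
        · simp only [G, dif_pos h]
          exact h.choose_spec.1
        · exact absurd (by simp only [G, dif_neg h]; rfl) hx0

end Stmt18

theorem stmt18 {Ω : Type v} [Nonempty Ω] (K : Set (Set (Gamble Ω))) :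
    CoherentK K ↔
    ∃ 𝔇 : Set (Set (Set (Gamble Ω))),
      𝔇.Nonempty ∧
      (∀ 𝔻 ∈ 𝔇, 𝔻.Nonempty ∧ ∀ D ∈ 𝔻, CoherentD D) ∧
      (∀ n : ℕ, 0 < n → ∀ Ds : Fin n → Set (Set (Gamble Ω)),
        (∀ i, Ds i ∈ 𝔇) → (⋂ i, Ds i).Nonempty) ∧
      (∀ B : Set (Gamble Ω),
        B ∈ K ↔ ∃ n : ℕ, 0 < n ∧ ∃ Ds : Fin n → Set (Set (Gamble Ω)),
          (∀ i, Ds i ∈ 𝔇) ∧ ∀ D ∈ ⋂ i, Ds i, (B ∩ D).Nonempty) := by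
  constructor
  · exact fun hK => Stmt18.forward hK
  · rintro ⟨𝔇, h1, h2, h3, h4⟩
    exact Stmt18.backward 𝔇 h1 h2 h3 h4
end
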